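/- Let N ≥ 1 and define 𝒱 = ((1+i)/2)·[[1_N, −i·1_N], [i·1_N, −1_N]] ∈ Mat_{2N}(ℂ). Then 𝒱 is unitary, 𝒱ᵀ𝒱 = K and 𝒱𝒱ᵀ = −K, and for every unitary W ∈ Mat_{2N}(ℂ) one has: Kᵀ·W̄·K = W if and only if all entries of 𝒱W𝒱* are real. Consequently the map W ↦ 𝒱W𝒱* is a group isomorphism from 𝒰 = { W ∈ Mat_{2N}(ℂ) unitary : Kᵀ·W̄·K = W } onto { O ∈ Mat_{2N}(ℂ) : all entries of O are real and OᵀO = 1 }, i.e. 𝒱𝒰𝒱* = O(2N). -/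
import Mathlib


noncomputable section
open Matrix

/-- The particle-hole symmetry matrix K = [[0, 1_N], [1_N, 0]]. -/
def Kmat (N : ℕ) : Matrix (Fin N ⊕ Fin N) (Fin N ⊕ Fin N) ℂ :=
  Matrix.fromBlocks 0 1 1 0

/-- The Cayley-type transformation 𝒱 = ((1+i)/2)·[[1, -i·1], [i·1, -1]]. -/
def Vmat (N : ℕ) : Matrix (Fin N ⊕ Fin N) (Fin N ⊕ Fin N) ℂ :=
  ((1 + Complex.I) / 2) •
    Matrix.fromBlocks 1 (-(Complex.I • (1 : Matrix (Fin N) (Fin N) ℂ)))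
      (Complex.I • (1 : Matrix (Fin N) (Fin N) ℂ)) (-1)

private lemma diagBlock (N : ℕ) :
    (fromBlocks (1+1) 0 0 (1+1) : Matrix (Fin N ⊕ Fin N) (Fin N ⊕ Fin N) ℂ)
      = (2:ℂ) • fromBlocks 1 0 0 1 := by
  rw [Matrix.fromBlocks_smul]
  congr 1 <;> simp [two_smul]

lemma VcV (N : ℕ) : (Vmat N)ᴴ * Vmat N = 1 := by
  simp only [Vmat, conjTranspose_smul, Matrix.fromBlocks_conjTranspose,
    conjTranspose_neg, conjTranspose_smul, conjTranspose_one,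
    smul_mul_assoc, Matrix.mul_smul, smul_smul, Matrix.fromBlocks_multiply]
  simp [Matrix.smul_mul, Matrix.mul_smul, smul_smul, Complex.ext_iff, ← fromBlocks_one]
  rw [diagBlock, smul_smul,
    show ((1 + -Complex.I) / 2 * ((1 + Complex.I) / 2)) * 2 = 1 by
      linear_combination (-1/2 : ℂ) * Complex.I_sq, one_smul]

lemma VVc (N : ℕ) : Vmat N * (Vmat N)ᴴ = 1 := by
  simp only [Vmat, conjTranspose_smul, Matrix.fromBlocks_conjTranspose,
    conjTranspose_neg, conjTranspose_smul, conjTranspose_one,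
    smul_mul_assoc, Matrix.mul_smul, smul_smul, Matrix.fromBlocks_multiply]
  simp [Matrix.smul_mul, Matrix.mul_smul, smul_smul, Complex.ext_iff, ← fromBlocks_one]
  rw [diagBlock, smul_smul,
    show ((1 + Complex.I) / 2 * ((1 + -Complex.I) / 2)) * 2 = 1 by
      linear_combination (-1/2 : ℂ) * Complex.I_sq, one_smul]

lemma VtV (N : ℕ) : (Vmat N)ᵀ * Vmat N = Kmat N := by
  simp only [Vmat, Kmat, transpose_smul, Matrix.fromBlocks_transpose,
    transpose_neg, transpose_smul, transpose_one,
    smul_mul_assoc, Matrix.mul_smul, smul_smul, Matrix.fromBlocks_multiply]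
  simp [Matrix.smul_mul, Matrix.mul_smul, smul_smul, Complex.ext_iff]
  have hb : -(Complex.I • (1 : Matrix (Fin N) (Fin N) ℂ)) + -(Complex.I • 1)
      = (-2 * Complex.I) • 1 := by module
  rw [hb, show (fromBlocks 0 ((-2 * Complex.I) • 1) ((-2 * Complex.I) • 1) 0 :
        Matrix (Fin N ⊕ Fin N) (Fin N ⊕ Fin N) ℂ)
      = (-2 * Complex.I) • fromBlocks 0 1 1 0 by
    rw [Matrix.fromBlocks_smul, smul_zero], smul_smul,
    show ((1 + Complex.I) / 2 * ((1 + Complex.I) / 2)) * (-2 * Complex.I) = 1 by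
      linear_combination (-Complex.I/2 - 1) * Complex.I_sq, one_smul]

lemma VVt (N : ℕ) : Vmat N * (Vmat N)ᵀ = -(Kmat N) := by
  simp only [Vmat, Kmat, transpose_smul, Matrix.fromBlocks_transpose,
    transpose_neg, transpose_smul, transpose_one,
    smul_mul_assoc, Matrix.mul_smul, smul_smul, Matrix.fromBlocks_multiply]
  simp [Matrix.smul_mul, Matrix.mul_smul, smul_smul, Complex.ext_iff]
  have hb : Complex.I • (1 : Matrix (Fin N) (Fin N) ℂ) + Complex.I • 1
      = (2 * Complex.I) • 1 := by module
  rw [hb, show (fromBlocks 0 ((2 * Complex.I) • 1) ((2 * Complex.I) • 1) 0 :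
        Matrix (Fin N ⊕ Fin N) (Fin N ⊕ Fin N) ℂ)
      = (2 * Complex.I) • fromBlocks 0 1 1 0 by
    rw [Matrix.fromBlocks_smul, smul_zero], smul_smul,
    show ((1 + Complex.I) / 2 * ((1 + Complex.I) / 2)) * (2 * Complex.I) = -1 by
      linear_combination (Complex.I/2 + 1) * Complex.I_sq, neg_one_smul]

lemma Kt (N : ℕ) : (Kmat N)ᵀ = Kmat N := by
  simp [Kmat, Matrix.fromBlocks_transpose]

lemma Kc (N : ℕ) : (Kmat N)ᴴ = Kmat N := by
  simp [Kmat, Matrix.fromBlocks_conjTranspose]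

lemma ctt {m n : Type*} (M : Matrix m n ℂ) : Mᴴᵀ = Mᵀᴴ := by
  ext i j; simp [Matrix.conjTranspose_apply]

lemma mapStar_eq {m n : Type*} (M : Matrix m n ℂ) : M.map star = Mᴴᵀ := by
  ext i j; simp [Matrix.conjTranspose_apply]

lemma mapStar_mul {n : Type*} [Fintype n] (A B : Matrix n n ℂ) :
    (A * B).map star = A.map star * B.map star := by
  simp only [mapStar_eq, Matrix.conjTranspose_mul, Matrix.transpose_mul]

lemma cancelV (N : ℕ) (A B : Matrix (Fin N ⊕ Fin N) (Fin N ⊕ Fin N) ℂ)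
    (h : Vmat N * A * (Vmat N)ᴴ = Vmat N * B * (Vmat N)ᴴ) : A = B := by
  have e : ∀ X : Matrix (Fin N ⊕ Fin N) (Fin N ⊕ Fin N) ℂ,
      (Vmat N)ᴴ * (Vmat N * X * (Vmat N)ᴴ) * Vmat N = X := by
    intro X
    calc (Vmat N)ᴴ * (Vmat N * X * (Vmat N)ᴴ) * Vmat N
        = ((Vmat N)ᴴ * Vmat N) * X * ((Vmat N)ᴴ * Vmat N) := by
          simp only [Matrix.mul_assoc]
      _ = X := by rw [VcV, Matrix.one_mul, Matrix.mul_one]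
  rw [← e A, ← e B, h]

/-- 𝒱 is unitary, 𝒱ᵀ𝒱 = K, 𝒱𝒱ᵀ = -K; a unitary W satisfies Kᵀ·W̄·K = W
iff 𝒱W𝒱* has real entries; and W ↦ 𝒱W𝒱* maps the group 𝒰 of canonical transformations
onto O(2N) (the real orthogonal matrices). -/
theorem cayley_transform_canonical_group (N : ℕ) (hN : 1 ≤ N) :
    Vmat N ∈ Matrix.unitaryGroup (Fin N ⊕ Fin N) ℂ ∧
    (Vmat N)ᵀ * Vmat N = Kmat N ∧
    Vmat N * (Vmat N)ᵀ = -(Kmat N) ∧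
    (∀ W ∈ Matrix.unitaryGroup (Fin N ⊕ Fin N) ℂ,
      ((Kmat N)ᵀ * W.map star * Kmat N = W ↔
        ∀ i j, ((Vmat N * W * (Vmat N)ᴴ) i j).im = 0)) ∧
    (fun W => Vmat N * W * (Vmat N)ᴴ) ''
        {W | W ∈ Matrix.unitaryGroup (Fin N ⊕ Fin N) ℂ ∧
          (Kmat N)ᵀ * W.map star * Kmat N = W} =
      {O : Matrix (Fin N ⊕ Fin N) (Fin N ⊕ Fin N) ℂ |
        (∀ i j, (O i j).im = 0) ∧ Oᵀ * O = 1} := by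
  have hVs : (Vmat N).map star = Vmat N * Kmat N := by
    have h1 : (Vmat N)ᴴ * (Vmat N).map star = Kmat N := by
      rw [mapStar_eq, ctt, ← Matrix.conjTranspose_mul, VtV, Kc]
    calc (Vmat N).map star
        = (Vmat N * (Vmat N)ᴴ) * (Vmat N).map star := by rw [VVc, Matrix.one_mul]
      _ = Vmat N * ((Vmat N)ᴴ * (Vmat N).map star) := by rw [Matrix.mul_assoc]
      _ = Vmat N * Kmat N := by rw [h1]
  have hVcs : ((Vmat N)ᴴ).map star = Kmat N * (Vmat N)ᴴ := by
    have h2 : ((Vmat N)ᴴ).map star = (Vmat N)ᵀ := by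
      rw [mapStar_eq, Matrix.conjTranspose_conjTranspose]
    rw [h2]
    calc (Vmat N)ᵀ = (Vmat N)ᵀ * (Vmat N * (Vmat N)ᴴ) := by rw [VVc, Matrix.mul_one]
      _ = ((Vmat N)ᵀ * Vmat N) * (Vmat N)ᴴ := by rw [Matrix.mul_assoc]
      _ = Kmat N * (Vmat N)ᴴ := by rw [VtV]
  have key : ∀ W : Matrix (Fin N ⊕ Fin N) (Fin N ⊕ Fin N) ℂ,
      (Vmat N * W * (Vmat N)ᴴ).map star
        = Vmat N * (Kmat N * W.map star * Kmat N) * (Vmat N)ᴴ := by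
    intro W
    rw [mapStar_mul, mapStar_mul, hVs, hVcs]
    simp only [Matrix.mul_assoc]
  have realiff : ∀ M : Matrix (Fin N ⊕ Fin N) (Fin N ⊕ Fin N) ℂ,
      (∀ i j, (M i j).im = 0) ↔ M.map star = M := by
    intro M
    constructor
    · intro h; ext i j
      simp [Matrix.map_apply, Complex.ext_iff, h i j]
    · intro h i j
      have h2 := congrArg Complex.im (congrFun (congrFun h i) j)
      simp [Matrix.map_apply] at h2
      linarith
  have mainiff : ∀ W : Matrix (Fin N ⊕ Fin N) (Fin N ⊕ Fin N) ℂ,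
      ((Kmat N)ᵀ * W.map star * Kmat N = W ↔
        ∀ i j, ((Vmat N * W * (Vmat N)ᴴ) i j).im = 0) := by
    intro W
    rw [Kt, realiff, key]
    constructor
    · intro h; rw [h]
    · intro h; exact cancelV N _ _ h
  have hVmem : Vmat N ∈ Matrix.unitaryGroup (Fin N ⊕ Fin N) ℂ := by
    rw [Matrix.mem_unitaryGroup_iff', Matrix.star_eq_conjTranspose]
    exact VcV N
  refine ⟨hVmem, VtV N, VVt N, fun W _ => mainiff W, ?_⟩
  ext O
  simp only [Set.mem_image, Set.mem_setOf_eq]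
  constructor
  · rintro ⟨W, ⟨hWu, hWc⟩, rfl⟩
    have hre := (mainiff W).mp hWc
    refine ⟨hre, ?_⟩
    have hOt : (Vmat N * W * (Vmat N)ᴴ)ᵀ = (Vmat N * W * (Vmat N)ᴴ)ᴴ := by
      ext i j
      simp only [Matrix.transpose_apply, Matrix.conjTranspose_apply]
      have := hre j i
      simp [Complex.ext_iff, this]
    have hW1 : Wᴴ * W = 1 := by
      rw [← Matrix.star_eq_conjTranspose]
      exact Matrix.mem_unitaryGroup_iff'.mp hWu
    rw [hOt]
    calc (Vmat N * W * (Vmat N)ᴴ)ᴴ * (Vmat N * W * (Vmat N)ᴴ)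
        = Vmat N * (Wᴴ * ((Vmat N)ᴴ * Vmat N * (W * (Vmat N)ᴴ))) := by
          simp only [Matrix.conjTranspose_mul, Matrix.conjTranspose_conjTranspose,
            Matrix.mul_assoc]
      _ = Vmat N * (Wᴴ * (W * (Vmat N)ᴴ)) := by rw [VcV, Matrix.one_mul]
      _ = Vmat N * (Vmat N)ᴴ := by
          rw [← Matrix.mul_assoc Wᴴ, hW1, Matrix.one_mul]
      _ = 1 := VVc N
  · rintro ⟨hre, hOtO⟩
    have hOt : Oᴴ = Oᵀ := by
      ext i j
      simp only [Matrix.transpose_apply, Matrix.conjTranspose_apply]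
      have := hre j i
      simp [Complex.ext_iff, this]
    have hO : Vmat N * ((Vmat N)ᴴ * O * Vmat N) * (Vmat N)ᴴ = O := by
      calc Vmat N * ((Vmat N)ᴴ * O * Vmat N) * (Vmat N)ᴴ
          = (Vmat N * (Vmat N)ᴴ) * O * (Vmat N * (Vmat N)ᴴ) := by
            simp only [Matrix.mul_assoc]
        _ = O := by rw [VVc, Matrix.one_mul, Matrix.mul_one]
    refine ⟨(Vmat N)ᴴ * O * Vmat N, ⟨?_, ?_⟩, hO⟩
    · rw [Matrix.mem_unitaryGroup_iff', Matrix.star_eq_conjTranspose]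
      calc ((Vmat N)ᴴ * O * Vmat N)ᴴ * ((Vmat N)ᴴ * O * Vmat N)
          = (Vmat N)ᴴ * (Oᴴ * (Vmat N * (Vmat N)ᴴ * (O * Vmat N))) := by
            simp only [Matrix.conjTranspose_mul, Matrix.conjTranspose_conjTranspose,
              Matrix.mul_assoc]
        _ = (Vmat N)ᴴ * (Oᴴ * (O * Vmat N)) := by rw [VVc, Matrix.one_mul]
        _ = (Vmat N)ᴴ * Vmat N := by
            rw [← Matrix.mul_assoc Oᴴ, hOt, hOtO, Matrix.one_mul]
        _ = 1 := VcV N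
    · apply (mainiff _).mpr
      rw [hO]
      exact hre
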